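/- Let Y be a finite metric space, v ∈ Y, and S a subset of B(v,1)∖{v} (the open unit ball around v minus v). Let W_S be the set of 1-lattices in which v is not in the lattice, all elements of S are in the lattice, and all other elements of B(v,1) are not in the lattice. Let B be the set of 1-lattices containing v. Then card(W_S) ≤ card(B); i.e., there is an injection from W_S into B. -/

import Mathlib

open Classical

/-- the recoloring injection. For a finite metric space `Y`, `v ∈ Y`
and `S ⊆ B(v,1) \ {v}`, the number of 1-lattices in which `v` is green, `S` is red
and the rest of `B(v,1)` is green is at most the number of 1-lattices containing `v`. -/
theorem recoloring_injection
    (Y : Type*) [MetricSpace Y] [Fintype Y]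
    (IsLattice : Finset Y → Prop)
    (hLat : ∀ L : Finset Y, IsLattice L ↔
      ((∀ x ∈ L, ∀ y ∈ L, x ≠ y → 1 ≤ dist x y) ∧
        ∀ L' : Finset Y, L ⊆ L' → (∀ x ∈ L', ∀ y ∈ L', x ≠ y → 1 ≤ dist x y) → L' = L))
    (v : Y) (S : Finset Y)
    (hS : ∀ y ∈ S, dist v y < 1 ∧ y ≠ v) :
    (Finset.univ.filter fun L : Finset Y =>
        IsLattice L ∧ v ∉ L ∧ (∀ y ∈ S, y ∈ L) ∧
          ∀ y : Y, dist v y < 1 → y ∉ S → y ∉ L).card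
      ≤ (Finset.univ.filter fun L : Finset Y => IsLattice L ∧ v ∈ L).card := by
  classical
  -- every 1-separated set extends to a lattice
  have ext : ∀ T : Finset Y, (∀ x ∈ T, ∀ y ∈ T, x ≠ y → 1 ≤ dist x y) →
      ∃ M : Finset Y, T ⊆ M ∧ IsLattice M := by
    intro T hT
    obtain ⟨M, hM, hmax⟩ := Finset.exists_maximal (s :=
      (Finset.univ.filter fun M : Finset Y =>
        T ⊆ M ∧ ∀ x ∈ M, ∀ y ∈ M, x ≠ y → 1 ≤ dist x y))
      ⟨T, Finset.mem_filter.2 ⟨Finset.mem_univ _, Finset.Subset.refl _, hT⟩⟩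
    simp only [Finset.mem_filter, Finset.mem_univ, true_and] at hM hmax
    refine ⟨M, hM.1, (hLat M).2 ⟨hM.2, ?_⟩⟩
    intro L' hsub hsep
    by_contra hne
    exact hne (Finset.Subset.antisymm (hmax ⟨hM.1.trans hsub, hsep⟩ hsub) hsub)
  -- the map
  set f : Finset Y → Finset Y := fun L =>
    if h : (∀ x ∈ insert v (L \ S), ∀ y ∈ insert v (L \ S), x ≠ y → 1 ≤ dist x y)
    then (ext _ h).choose else ∅ with hf
  apply Finset.card_le_card_of_injOn f
  · -- maps into
    intro L hL
    simp only [Finset.mem_coe, Finset.mem_filter, Finset.mem_univ, true_and] at hL ⊢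
    obtain ⟨hLlat, hvL, hSL, hball⟩ := hL
    have sepL := ((hLat L).1 hLlat).1
    have hsepT : ∀ x ∈ insert v (L \ S), ∀ y ∈ insert v (L \ S), x ≠ y → 1 ≤ dist x y := by
      intro x hx y hy hxy
      simp only [Finset.mem_insert, Finset.mem_sdiff] at hx hy
      rcases hx with rfl | ⟨hxL, hxS⟩
      · rcases hy with rfl | ⟨hyL, hyS⟩
        · exact absurd rfl hxy
        · by_contra hlt
          exact hball y (lt_of_not_ge hlt) hyS hyL
      · rcases hy with rfl | ⟨hyL, hyS⟩
        · rw [dist_comm]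
          by_contra hlt
          exact hball x (lt_of_not_ge hlt) hxS hxL
        · exact sepL x hxL y hyL hxy
    have hfL : f L = (ext _ hsepT).choose := dif_pos hsepT
    obtain ⟨hTM, hMlat⟩ := (ext _ hsepT).choose_spec
    rw [hfL]
    exact ⟨hMlat, hTM (Finset.mem_insert_self _ _)⟩
  · -- injective
    -- key reconstruction lemma
    have key : ∀ L : Finset Y, IsLattice L → v ∉ L → (∀ y ∈ S, y ∈ L) →
        (∀ y : Y, dist v y < 1 → y ∉ S → y ∉ L) →
        ∀ M : Finset Y, insert v (L \ S) ⊆ M → IsLattice M →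
        L = S ∪ M.filter (fun m => m ≠ v ∧ ∀ s ∈ S, 1 ≤ dist m s) := by
      intro L hLlat hvL hSL hball M hTM hMlat
      have sepL := ((hLat L).1 hLlat).1
      have maxL := ((hLat L).1 hLlat).2
      have sepM := ((hLat M).1 hMlat).1
      ext x
      simp only [Finset.mem_union, Finset.mem_filter]
      constructor
      · intro hxL
        by_cases hxS : x ∈ S
        · exact Or.inl hxS
        · refine Or.inr ⟨hTM (by simp [hxL, hxS]), fun h => hvL (h ▸ hxL), ?_⟩
          intro s hs
          exact sepL x hxL s (hSL s hs) (fun h => hxS (h ▸ hs))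
      · rintro (hxS | ⟨hxM, hxv, hxsep⟩)
        · exact hSL x hxS
        · by_contra hxL
          have hsep' : ∀ a ∈ insert x L, ∀ b ∈ insert x L, a ≠ b → 1 ≤ dist a b := by
            intro a ha b hb hab
            simp only [Finset.mem_insert] at ha hb
            rcases ha with rfl | haL
            · rcases hb with rfl | hbL
              · exact absurd rfl hab
              · by_cases hbS : b ∈ S
                · exact hxsep b hbS
                · have hbM : b ∈ M := hTM (by simp [hbL, hbS])
                  exact sepM a hxM b hbM (fun h => hxL (h ▸ hbL))
            · rcases hb with rfl | hbL
              · rw [dist_comm]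
                by_cases haS : a ∈ S
                · exact hxsep a haS
                · have haM : a ∈ M := hTM (by simp [haL, haS])
                  exact sepM b hxM a haM (fun h => hxL (h ▸ haL))
              · exact sepL a haL b hbL hab
          have := maxL (insert x L) (Finset.subset_insert _ _) hsep'
          exact hxL (this ▸ Finset.mem_insert_self x L)
    intro L1 hL1 L2 hL2 hfeq
    simp only [Finset.coe_filter, Finset.mem_univ, Set.mem_setOf_eq, true_and] at hL1 hL2
    obtain ⟨h1lat, h1v, h1S, h1b⟩ := hL1
    obtain ⟨h2lat, h2v, h2S, h2b⟩ := hL2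
    have sep1 := ((hLat L1).1 h1lat).1
    have sep2 := ((hLat L2).1 h2lat).1
    have hsepT1 : ∀ x ∈ insert v (L1 \ S), ∀ y ∈ insert v (L1 \ S), x ≠ y → 1 ≤ dist x y := by
      intro x hx y hy hxy
      simp only [Finset.mem_insert, Finset.mem_sdiff] at hx hy
      rcases hx with rfl | ⟨hxL, hxS⟩
      · rcases hy with rfl | ⟨hyL, hyS⟩
        · exact absurd rfl hxy
        · by_contra hlt
          exact h1b y (lt_of_not_ge hlt) hyS hyL
      · rcases hy with rfl | ⟨hyL, hyS⟩
        · rw [dist_comm]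
          by_contra hlt
          exact h1b x (lt_of_not_ge hlt) hxS hxL
        · exact sep1 x hxL y hyL hxy
    have hsepT2 : ∀ x ∈ insert v (L2 \ S), ∀ y ∈ insert v (L2 \ S), x ≠ y → 1 ≤ dist x y := by
      intro x hx y hy hxy
      simp only [Finset.mem_insert, Finset.mem_sdiff] at hx hy
      rcases hx with rfl | ⟨hxL, hxS⟩
      · rcases hy with rfl | ⟨hyL, hyS⟩
        · exact absurd rfl hxy
        · by_contra hlt
          exact h2b y (lt_of_not_ge hlt) hyS hyL
      · rcases hy with rfl | ⟨hyL, hyS⟩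
        · rw [dist_comm]
          by_contra hlt
          exact h2b x (lt_of_not_ge hlt) hxS hxL
        · exact sep2 x hxL y hyL hxy
    have hf1 : f L1 = (ext _ hsepT1).choose := dif_pos hsepT1
    have hf2 : f L2 = (ext _ hsepT2).choose := dif_pos hsepT2
    obtain ⟨hTM1, hM1lat⟩ := (ext _ hsepT1).choose_spec
    obtain ⟨hTM2, hM2lat⟩ := (ext _ hsepT2).choose_spec
    have e1 := key L1 h1lat h1v h1S h1b (f L1) (hf1 ▸ hTM1) (hf1 ▸ hM1lat)
    have e2 := key L2 h2lat h2v h2S h2b (f L2) (hf2 ▸ hTM2) (hf2 ▸ hM2lat)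
    rw [e1, e2, hfeq]
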